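/- If G and G' are both aggressively Berge-K_{1,ℓ}-saturated 3-uniform hypergraphs, then their disjoint union G ⊔ G' is aggressively Berge-K_{1,ℓ}-saturated. -/

import Mathlib

open Finset

variable {V : Type} [DecidableEq V]

/-- A hypergraph (given by its edge set) is 3-uniform. -/
def Uniform3 (E : Finset (Finset V)) : Prop := ∀ e ∈ E, e.card = 3

/-- There is a Berge star `K_{1,m}` centered at `v`: `m` distinct leaves `y i`
and `m` distinct hyperedges `f i` with `{v, y i} ⊆ f i`. -/
def IsBergeStar (E : Finset (Finset V)) (v : V) (m : ℕ) : Prop :=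
  ∃ (y : Fin m → V) (f : Fin m → Finset V),
    Function.Injective y ∧ Function.Injective f ∧
    ∀ i, f i ∈ E ∧ v ∈ f i ∧ y i ∈ f i ∧ y i ≠ v

/-- The Berge degree of `v`: the largest `m` such that a Berge star `K_{1,m}`
centered at `v` exists. -/
noncomputable def bergeDeg (E : Finset (Finset V)) (v : V) : ℕ :=
  sSup {m | IsBergeStar E v m}

/-- The degree of `v`: the number of hyperedges containing `v`. -/
def hdeg (E : Finset (Finset V)) (v : V) : ℕ := (E.filter (fun e => v ∈ e)).card

/-- The neighborhood of `v`: vertices sharing an edge with `v`. -/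
def nbr (E : Finset (Finset V)) (v : V) : Finset V :=
  ((E.filter (fun e => v ∈ e)).biUnion id).erase v

/-- `E` contains no Berge star `K_{1,ℓ}`. -/
def BergeFree (E : Finset (Finset V)) (ℓ : ℕ) : Prop := ∀ v, ¬ IsBergeStar E v ℓ

/-- `E` is Berge-`K_{1,ℓ}`-saturated. -/
def Saturated3 (E : Finset (Finset V)) (ℓ : ℕ) : Prop :=
  BergeFree E ℓ ∧
  ∀ e : Finset V, e.card = 3 → e ∉ E → ∃ w, IsBergeStar (insert e E) w ℓ

/-- The disjoint union of two hypergraphs. -/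
def sumEdges {W : Type} [DecidableEq W]
    (E : Finset (Finset V)) (F : Finset (Finset W)) : Finset (Finset (V ⊕ W)) :=
  E.image (fun e => e.map ⟨Sum.inl, Sum.inl_injective⟩) ∪
  F.image (fun e => e.map ⟨Sum.inr, Sum.inr_injective⟩)

/-- `E` is aggressively Berge-`K_{1,ℓ}`-saturated: its disjoint union with any
Berge-`K_{1,ℓ}`-saturated 3-graph is Berge-`K_{1,ℓ}`-saturated. -/
def Aggressive (E : Finset (Finset V)) (ℓ : ℕ) : Prop :=
  ∀ (W : Type) [Fintype W] [DecidableEq W] (F : Finset (Finset W)),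
    Uniform3 F → Saturated3 F ℓ → Saturated3 (sumEdges E F) ℓ


section Aux

variable {A B : Type} [DecidableEq A] [DecidableEq B]

set_option linter.unusedSectionVars false

/-- Relabel a hypergraph along an equivalence. -/
def mapE (σ : A ≃ B) (E : Finset (Finset A)) : Finset (Finset B) :=
  E.image (fun e => e.map σ.toEmbedding)

lemma trans_symm_emb (σ : A ≃ B) :
    σ.toEmbedding.trans σ.symm.toEmbedding = .refl A := by ext x; simp

lemma symm_trans_emb (σ : A ≃ B) :
    σ.symm.toEmbedding.trans σ.toEmbedding = .refl B := by ext x; simp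

lemma mapE_mapE (σ : A ≃ B) (E : Finset (Finset A)) :
    mapE σ.symm (mapE σ E) = E := by
  simp [mapE, Finset.image_image, Function.comp_def, Finset.map_map, trans_symm_emb]
  exact (Finset.image_congr (fun x _ => (Finset.map_refl (s := x) : x.map (Function.Embedding.refl A) = x))).trans Finset.image_id'

lemma star_mapE (σ : A ≃ B) (E : Finset (Finset A)) (v : A) (m : ℕ)
    (h : IsBergeStar E v m) : IsBergeStar (mapE σ E) (σ v) m := by
  obtain ⟨y, f, hy, hf, hall⟩ := h
  refine ⟨σ ∘ y, fun i => (f i).map σ.toEmbedding, σ.injective.comp hy, ?_, ?_⟩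
  · intro i j hij
    exact hf (Finset.map_injective σ.toEmbedding hij)
  · intro i
    obtain ⟨h1, h2, h3, h4⟩ := hall i
    refine ⟨Finset.mem_image_of_mem _ h1, ?_, ?_, ?_⟩
    · exact Finset.mem_map_of_mem _ h2
    · exact Finset.mem_map_of_mem _ h3
    · intro h; exact h4 (σ.injective h)

lemma mapE_insert (σ : A ≃ B) (E : Finset (Finset A)) (e : Finset A) :
    mapE σ (insert e E) = insert (e.map σ.toEmbedding) (mapE σ E) := by
  simp [mapE, Finset.image_insert]

lemma sat_mapE (σ : A ≃ B) (E : Finset (Finset A)) (ℓ : ℕ)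
    (h : Saturated3 E ℓ) : Saturated3 (mapE σ E) ℓ := by
  constructor
  · intro v hv
    have := star_mapE σ.symm (mapE σ E) v ℓ hv
    rw [mapE_mapE] at this
    exact h.1 _ this
  · intro e he hne
    have hcard : (e.map σ.symm.toEmbedding).card = 3 := by
      rw [Finset.card_map]; exact he
    have hmem : e.map σ.symm.toEmbedding ∉ E := by
      intro hmem
      apply hne
      have : (e.map σ.symm.toEmbedding).map σ.toEmbedding ∈ mapE σ E :=
        Finset.mem_image_of_mem _ hmem
      rwa [Finset.map_map, show σ.symm.toEmbedding.trans σ.toEmbedding = .refl B by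
        ext x; simp, Finset.map_refl] at this
    obtain ⟨w, hw⟩ := h.2 _ hcard hmem
    refine ⟨σ w, ?_⟩
    have := star_mapE σ _ w ℓ hw
    rwa [mapE_insert, Finset.map_map, show σ.symm.toEmbedding.trans σ.toEmbedding = .refl B by
      ext x; simp, Finset.map_refl] at this

lemma uniform_sumEdges {A B : Type} [DecidableEq A] [DecidableEq B]
    (E : Finset (Finset A)) (F : Finset (Finset B))
    (hE : Uniform3 E) (hF : Uniform3 F) : Uniform3 (sumEdges E F) := by
  intro e he
  rcases Finset.mem_union.mp he with h | h <;>
    · obtain ⟨a, ha, rfl⟩ := Finset.mem_image.mp h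
      rw [Finset.card_map]
      first | exact hE a ha | exact hF a ha

lemma sumEdges_assoc {A B C : Type} [DecidableEq A] [DecidableEq B] [DecidableEq C]
    (E : Finset (Finset A)) (F : Finset (Finset B)) (H : Finset (Finset C)) :
    sumEdges (sumEdges E F) H =
      mapE (Equiv.sumAssoc A B C).symm (sumEdges E (sumEdges F H)) := by
  simp only [sumEdges, mapE, Finset.image_union, Finset.image_image, Function.comp_def,
    Finset.map_map, Finset.union_assoc]
  refine congrArg₂ (· ∪ ·) ?_ (congrArg₂ (· ∪ ·) ?_ ?_) <;>
    · apply Finset.image_congr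
      intro e _
      congr 1
end Aux

theorem stmt2 {W : Type} [Fintype V] [Fintype W] [DecidableEq W]
    (E : Finset (Finset V)) (F : Finset (Finset W)) (ℓ : ℕ)
    (hE : Uniform3 E) (hF : Uniform3 F)
    (hAE : Aggressive E ℓ) (hAF : Aggressive F ℓ) :
    Aggressive (sumEdges E F) ℓ := by
  intro X _ _ H hH hHsat
  have hFH : Saturated3 (sumEdges F H) ℓ := hAF X H hH hHsat
  have hFHu : Uniform3 (sumEdges F H) := uniform_sumEdges F H hF hH
  have h := hAE (W ⊕ X) (sumEdges F H) hFHu hFH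
  rw [sumEdges_assoc]
  exact sat_mapE _ _ _ h
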